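/- For u > 0 and x, y ∈ ℝ define q_u(x, y) = (2πu)^{−1/2} ( exp(−(x−y)²/(2u)) − exp(−(x+y)²/(2u)) ). Then for all u, v > 0 and all x, y ≥ 0 the Chapman–Kolmogorov identity holds: ∫₀^∞ q_u(x, z) · q_v(z, y) dz = q_{u+v}(x, y). -/

import Mathlib

open MeasureTheory Real

/-- The transition density of Brownian motion killed at `0`. -/
noncomputable def killedBMDensity (u x y : ℝ) : ℝ :=
  (Real.sqrt (2 * Real.pi * u))⁻¹ *
    (Real.exp (-(x - y) ^ 2 / (2 * u)) - Real.exp (-(x + y) ^ 2 / (2 * u)))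

/-- The Gaussian kernel product appearing in the Chapman–Kolmogorov computation. -/
noncomputable def ckKernel (u v a b z : ℝ) : ℝ :=
  Real.exp (-(a - z) ^ 2 / (2 * u)) * Real.exp (-(z - b) ^ 2 / (2 * v))

lemma ckKernel_eq (u v : ℝ) (hu : 0 < u) (hv : 0 < v) (a b z : ℝ) :
    ckKernel u v a b z
      = Real.exp (-(a - b) ^ 2 / (2 * (u + v))) *
        Real.exp (-((u + v) / (2 * u * v)) * (z - (v * a + u * b) / (u + v)) ^ 2) := by
  have huv : (u + v) ≠ 0 := by positivity
  rw [ckKernel, ← Real.exp_add, ← Real.exp_add]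
  congr 1
  field_simp
  ring

lemma integrable_ckKernel (u v : ℝ) (hu : 0 < u) (hv : 0 < v) (a b : ℝ) :
    Integrable (fun z : ℝ => ckKernel u v a b z) := by
  have hc : 0 < (u + v) / (2 * u * v) := by positivity
  simp_rw [ckKernel_eq u v hu hv a b]
  exact ((integrable_exp_neg_mul_sq hc).comp_sub_right _).const_mul _

lemma integral_ckKernel (u v : ℝ) (hu : 0 < u) (hv : 0 < v) (a b : ℝ) :
    ∫ z : ℝ, ckKernel u v a b z
      = Real.sqrt (2 * π * u * v / (u + v)) * Real.exp (-(a - b) ^ 2 / (2 * (u + v))) := by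
  have hc : 0 < (u + v) / (2 * u * v) := by positivity
  simp_rw [ckKernel_eq u v hu hv a b]
  rw [integral_const_mul, integral_sub_right_eq_self
      (fun z : ℝ => Real.exp (-((u + v) / (2 * u * v)) * z ^ 2)) ((v * a + u * b) / (u + v)),
    integral_gaussian, mul_comm]
  congr 2
  field_simp

lemma ck_const_eq (u v : ℝ) (hu : 0 < u) (hv : 0 < v) :
    (Real.sqrt (2 * π * u))⁻¹ * (Real.sqrt (2 * π * v))⁻¹ * Real.sqrt (2 * π * u * v / (u + v))
      = (Real.sqrt (2 * π * (u + v)))⁻¹ := by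
  have pi_pos := Real.pi_pos
  rw [← Real.sqrt_inv, ← Real.sqrt_inv, ← Real.sqrt_mul (by positivity),
    ← Real.sqrt_mul (by positivity), ← Real.sqrt_inv]
  congr 1
  field_simp

/-- Chapman–Kolmogorov identity for the transition density of Brownian motion killed at `0`:
`∫₀^∞ q_u(x,z) q_v(z,y) dz = q_{u+v}(x,y)` for `u, v > 0` and `x, y ≥ 0`. -/
theorem killedBMDensity_chapman_kolmogorov
    (u v : ℝ) (hu : 0 < u) (hv : 0 < v) (x y : ℝ) (hx : 0 ≤ x) (hy : 0 ≤ y) :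
    ∫ z in Set.Ioi (0:ℝ), killedBMDensity u x z * killedBMDensity v z y
      = killedBMDensity (u + v) x y := by
  have huv : 0 < u + v := by linarith
  set F : ℝ → ℝ := fun z => killedBMDensity u x z * killedBMDensity v z y with hF
  have hFeq : ∀ z : ℝ, F z
      = (Real.sqrt (2 * Real.pi * u))⁻¹ * (Real.sqrt (2 * Real.pi * v))⁻¹ *
        (ckKernel u v x y z - ckKernel u v x (-y) z - ckKernel u v (-x) y z
          + ckKernel u v (-x) (-y) z) := by
    intro z
    simp only [hF, killedBMDensity, ckKernel]
    rw [show (-(x + z) ^ 2 : ℝ) = -((-x) - z) ^ 2 by ring,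
        show (-(z + y) ^ 2 : ℝ) = -(z - (-y)) ^ 2 by ring]
    ring
  have heven : ∀ z : ℝ, F |z| = F z := by
    intro z
    rcases abs_choice z with h | h
    · rw [h]
    · rw [h]
      simp only [hF, killedBMDensity]
      rw [show (-(x - -z) ^ 2 : ℝ) = -(x + z) ^ 2 by ring,
          show (-(x + -z) ^ 2 : ℝ) = -(x - z) ^ 2 by ring,
          show (-(-z - y) ^ 2 : ℝ) = -(z + y) ^ 2 by ring,
          show (-(-z + y) ^ 2 : ℝ) = -(z - y) ^ 2 by ring]
      ring
  have h2 : ∫ z : ℝ, F z = 2 * ∫ z in Set.Ioi (0:ℝ), F z := by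
    rw [← integral_comp_abs (f := F)]
    simp_rw [heven]
  have h3 : ∫ z : ℝ, F z
      = (Real.sqrt (2 * Real.pi * u))⁻¹ * (Real.sqrt (2 * Real.pi * v))⁻¹ *
        (2 * Real.sqrt (2 * π * u * v / (u + v)) *
          (Real.exp (-(x - y) ^ 2 / (2 * (u + v))) - Real.exp (-(x + y) ^ 2 / (2 * (u + v))))) := by
    have i1 : Integrable (fun z : ℝ => ckKernel u v x y z) := integrable_ckKernel u v hu hv x y
    have i2 : Integrable (fun z : ℝ => ckKernel u v x (-y) z) :=
      integrable_ckKernel u v hu hv x (-y)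
    have i3 : Integrable (fun z : ℝ => ckKernel u v (-x) y z) :=
      integrable_ckKernel u v hu hv (-x) y
    have i4 : Integrable (fun z : ℝ => ckKernel u v (-x) (-y) z) :=
      integrable_ckKernel u v hu hv (-x) (-y)
    have i12 : Integrable (fun z : ℝ => ckKernel u v x y z - ckKernel u v x (-y) z) := i1.sub i2
    have i123 : Integrable
        (fun z : ℝ => ckKernel u v x y z - ckKernel u v x (-y) z - ckKernel u v (-x) y z) :=
      i12.sub i3
    simp_rw [hFeq]
    rw [integral_const_mul, integral_add i123 i4, integral_sub i12 i3, integral_sub i1 i2,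
      integral_ckKernel u v hu hv x y, integral_ckKernel u v hu hv x (-y),
      integral_ckKernel u v hu hv (-x) y, integral_ckKernel u v hu hv (-x) (-y),
      show (-(x - -y) ^ 2 : ℝ) = -(x + y) ^ 2 by ring,
      show (-(-x - y) ^ 2 : ℝ) = -(x + y) ^ 2 by ring,
      show (-(-x - -y) ^ 2 : ℝ) = -(x - y) ^ 2 by ring]
    ring
  have h4 : ∫ z in Set.Ioi (0:ℝ), F z = (∫ z : ℝ, F z) / 2 := by
    rw [h2]; ring
  rw [h4, h3, killedBMDensity]
  rw [show (Real.sqrt (2 * Real.pi * u))⁻¹ * (Real.sqrt (2 * Real.pi * v))⁻¹ *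
        (2 * Real.sqrt (2 * π * u * v / (u + v)) *
          (Real.exp (-(x - y) ^ 2 / (2 * (u + v))) - Real.exp (-(x + y) ^ 2 / (2 * (u + v))))) / 2
      = ((Real.sqrt (2 * π * u))⁻¹ * (Real.sqrt (2 * π * v))⁻¹ *
          Real.sqrt (2 * π * u * v / (u + v))) *
        (Real.exp (-(x - y) ^ 2 / (2 * (u + v))) - Real.exp (-(x + y) ^ 2 / (2 * (u + v))))
      from by ring,
    ck_const_eq u v hu hv]
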